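/- The function g(x) = (x^2 + 2ax - 2a^2)^5 + (i x^2 - 2ax + 2i a^2)^5, viewed as a polynomial in x over the Gaussian integers (or complex numbers), is an even function: g(x) = g(-x) for all x. -/
import Mathlib

theorem stmt_1 (a : ℂ) (g : ℂ → ℂ)
    (hg : ∀ x, g x = (x^2 + 2*a*x - 2*a^2)^5 + (Complex.I*x^2 - 2*a*x + 2*Complex.I*a^2)^5) :
    ∀ x, g x = g (-x) := by
  intro x
  rw [hg, hg]
  have h3 : Complex.I ^ 3 = -Complex.I := by
    rw [pow_succ, Complex.I_sq]; ring
  have h4 : Complex.I ^ 4 = 1 := by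
    rw [pow_succ, h3]; simp [Complex.I_mul_I]
  have h5 : Complex.I ^ 5 = Complex.I := by
    rw [pow_succ, h4, one_mul]
  ring_nf
  simp only [h3, h4, h5, Complex.I_sq]
  ring
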